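/- For every λ > 0 there exists a constant C > 0 (depending only on λ) such that for all b with -1 < b < 1, ∫_{-1}^{1} (1 - b s)^{-λ-1} (1 + s) (1 - s^2)^{λ-1} ds ≤ C / (1 - |b|). -/

import Mathlib

open MeasureTheory Set

-- integrability of the model function on [0,2]
lemma paley_aux_integrable (lam t : ℝ) (hlam : 0 < lam) (ht : 0 < t) :
    IntervalIntegrable (fun u : ℝ => u ^ (lam - 1) * (t + u) ^ (-lam - 1)) volume 0 2 := by
  apply IntervalIntegrable.mul_continuousOn
  · exact intervalIntegral.intervalIntegrable_rpow' (by linarith)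
  · apply ContinuousOn.rpow_const
    · exact (continuous_const.add continuous_id).continuousOn
    · intro x hx
      rw [uIcc_of_le (by norm_num : (0:ℝ) ≤ 2)] at hx
      exact Or.inl (by nlinarith [hx.1])

-- FTC bound
lemma paley_aux_ftc (lam t : ℝ) (hlam : 0 < lam) (ht : 0 < t) :
    ∫ u in (0:ℝ)..2, u ^ (lam - 1) * (t + u) ^ (-lam - 1) ≤ 1 / (lam * t) := by
  set F : ℝ → ℝ := fun u => (u / (t + u)) ^ lam / (lam * t) with hF
  have key : ∫ u in (0:ℝ)..2, u ^ (lam - 1) * (t + u) ^ (-lam - 1) = F 2 - F 0 := by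
    apply intervalIntegral.integral_eq_sub_of_hasDeriv_right_of_le (by norm_num)
    · apply ContinuousOn.div_const
      apply ContinuousOn.rpow_const
      · apply ContinuousOn.div continuousOn_id
          ((continuous_const.add continuous_id).continuousOn)
        intro x hx
        simp only [Pi.add_apply, id_eq]
        have h1 := hx.1
        positivity
      · intro x hx
        exact Or.inr hlam.le
    · intro u hu
      obtain ⟨hu0, hu2⟩ := hu
      have htu : 0 < t + u := by linarith
      have hinner : HasDerivAt (fun u : ℝ => u / (t + u)) (t / (t + u) ^ 2) u := by
        have h1 : HasDerivAt (fun u : ℝ => u) 1 u := hasDerivAt_id u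
        have h2 : HasDerivAt (fun u : ℝ => t + u) 1 u := (hasDerivAt_id u).const_add t
        have := h1.div h2 htu.ne'
        refine this.congr_deriv ?_
        ring
      have hq : 0 < u / (t + u) := div_pos hu0 htu
      have houter : HasDerivAt (fun x : ℝ => x ^ lam)
          (lam * (u / (t + u)) ^ (lam - 1)) (u / (t + u)) :=
        Real.hasDerivAt_rpow_const (Or.inl hq.ne')
      have hcomp := (houter.comp u hinner).div_const (lam * t)
      have hd : HasDerivAt F (u ^ (lam - 1) * (t + u) ^ (-lam - 1)) u := by
        refine hcomp.congr_deriv ?_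
        symm
        rw [Real.div_rpow hu0.le htu.le]
        rw [show (-lam - 1 : ℝ) = -(lam - 1) + -2 by ring, Real.rpow_add htu,
          Real.rpow_neg htu.le, Real.rpow_neg htu.le,
          show ((t+u):ℝ) ^ (2:ℝ) = (t+u)^2 by
            rw [show (2:ℝ) = ((2:ℕ):ℝ) by norm_num, Real.rpow_natCast]]
        have h3 : ((t+u):ℝ) ^ (lam - 1) ≠ 0 := (Real.rpow_pos_of_pos htu _).ne'
        have h4 : ((t+u):ℝ)^2 ≠ 0 := by positivity
        field_simp
      exact hd.hasDerivWithinAt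
    · exact paley_aux_integrable lam t hlam ht
  rw [key]
  have hF0 : F 0 = 0 := by
    simp [hF, Real.zero_rpow hlam.ne']
  have hF2 : F 2 ≤ 1 / (lam * t) := by
    have h1 : (2 / (t + 2) : ℝ) ^ lam ≤ 1 := by
      apply Real.rpow_le_one (by positivity) _ hlam.le
      rw [div_le_one (by linarith)]
      linarith
    calc F 2 = (2 / (t + 2)) ^ lam / (lam * t) := rfl
      _ ≤ 1 / (lam * t) := by
          apply div_le_div_of_nonneg_right h1 (by positivity) |>.trans_eq rfl
  linarith

lemma two_rpow_two : (4:ℝ) = (2:ℝ) ^ (2:ℝ) := by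
  have h : (2:ℝ) ^ ((2:ℕ):ℝ) = (2:ℝ) ^ (2:ℕ) := Real.rpow_natCast 2 2
  rw [(by norm_num : ((2:ℕ):ℝ) = (2:ℝ))] at h
  rw [h]; norm_num

lemma paley_aux_pointwise (lam b s : ℝ) (hlam : 0 < lam) (hb : |b| < 1)
    (hs1 : -1 < s) (hs2 : s < 1) :
    (1 - b * s) ^ (-lam - 1) * (1 + s) * (1 - s ^ 2) ^ (lam - 1)
      ≤ (2:ℝ) ^ (3 * lam + 2) *
        ((1 - s) ^ (lam - 1) * ((1 - |b|) + (1 - s)) ^ (-lam - 1)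
          + (1 + s) ^ (lam - 1) * ((1 - |b|) + (1 + s)) ^ (-lam - 1)) := by
  set t := 1 - |b| with htdef
  have ht : 0 < t := by simp only [htdef]; linarith [hb]
  have h1s : 0 < 1 + s := by linarith
  have h2s : 0 < 1 - s := by linarith
  set w := 1 - |s| with hwdef
  have habs : |s| < 1 := abs_lt.2 ⟨hs1, hs2⟩
  have hw : 0 < w := by simp only [hwdef]; linarith
  have hw1 : w ≤ 1 := by have := abs_nonneg s; simp only [hwdef]; linarith
  have hbs : t + w ≤ 4 * (1 - b * s) := by
    have h1 : b * s ≤ |b| * |s| := by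
      calc b * s ≤ |b * s| := le_abs_self _
        _ = |b| * |s| := abs_mul b s
    have h2 := abs_nonneg b
    have h3 := abs_nonneg s
    nlinarith
  have hbs0 : 0 < 1 - b * s := by
    have h1 : b * s ≤ |b| * |s| := by
      calc b * s ≤ |b * s| := le_abs_self _
        _ = |b| * |s| := abs_mul b s
    nlinarith [abs_nonneg b, abs_nonneg s]
  -- bound on the first factor
  have hA : (1 - b * s) ^ (-lam - 1) ≤ (2:ℝ) ^ (2 * lam + 2) * (t + w) ^ (-lam - 1) := by
    have h1 : (1 - b * s) ^ (-lam - 1) ≤ ((t + w) / 4) ^ (-lam - 1) :=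
      Real.rpow_le_rpow_of_nonpos (by positivity) (by linarith) (by linarith)
    have h2 : ((t + w) / 4 : ℝ) ^ (-lam - 1)
        = (2:ℝ) ^ (2 * lam + 2) * (t + w) ^ (-lam - 1) := by
      rw [Real.div_rpow (by positivity) (by norm_num), two_rpow_two,
        ← Real.rpow_mul (by norm_num : (0:ℝ) ≤ 2), div_eq_mul_inv,
        ← Real.rpow_neg (by norm_num : (0:ℝ) ≤ 2),
        show -(2 * (-lam - 1)) = 2 * lam + 2 by ring, mul_comm]
    linarith [h1, h2.le, h2.ge]
  -- bound on the remaining factors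
  have hB : (1 + s) * (1 - s ^ 2) ^ (lam - 1) ≤ (2:ℝ) ^ lam * w ^ (lam - 1) := by
    have hfact : (1 - s ^ 2 : ℝ) = (1 - s) * (1 + s) := by ring
    rw [hfact, Real.mul_rpow h2s.le h1s.le]
    have hsum : (1 + s) * ((1 + s) ^ (lam - 1)) = (1 + s) ^ lam := by
      nth_rewrite 1 [← Real.rpow_one (1 + s)]
      rw [← Real.rpow_add h1s]
      ring_nf
    rcases le_or_gt 0 s with hcase | hcase
    · -- w = 1 - s
      have hws : w = 1 - s := by rw [hwdef, abs_of_nonneg hcase]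
      rw [hws]
      have h1 : (1 + s) ^ lam ≤ (2:ℝ) ^ lam :=
        Real.rpow_le_rpow h1s.le (by linarith) hlam.le
      calc (1 + s) * ((1 - s) ^ (lam - 1) * (1 + s) ^ (lam - 1))
          = (1 + s) ^ lam * (1 - s) ^ (lam - 1) := by rw [← hsum]; ring
        _ ≤ (2:ℝ) ^ lam * (1 - s) ^ (lam - 1) := by
            have := Real.rpow_nonneg h2s.le (lam - 1)
            nlinarith
    · -- w = 1 + s
      have hws : w = 1 + s := by rw [hwdef, abs_of_neg hcase]; ring
      rw [hws]
      have h1 : (1 - s) ^ (lam - 1) ≤ (2:ℝ) ^ lam := by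
        rcases le_or_gt 1 lam with hl | hl
        · calc (1 - s) ^ (lam - 1) ≤ (2:ℝ) ^ (lam - 1) :=
              Real.rpow_le_rpow h2s.le (by linarith) (by linarith)
            _ ≤ (2:ℝ) ^ lam :=
              Real.rpow_le_rpow_of_exponent_le (by norm_num) (by linarith)
        · calc (1 - s) ^ (lam - 1) ≤ 1 :=
              Real.rpow_le_one_of_one_le_of_nonpos (by linarith) (by linarith)
            _ ≤ (2:ℝ) ^ lam := Real.one_le_rpow (by norm_num) hlam.le
      have h2 : (1 + s) * (1 + s) ^ (lam - 1) ≤ (1 + s) ^ (lam - 1) := by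
        nth_rewrite 2 [← one_mul ((1 + s) ^ (lam - 1))]
        apply mul_le_mul_of_nonneg_right (by linarith) (Real.rpow_nonneg h1s.le _)
      calc (1 + s) * ((1 - s) ^ (lam - 1) * (1 + s) ^ (lam - 1))
          = (1 - s) ^ (lam - 1) * ((1 + s) * (1 + s) ^ (lam - 1)) := by ring
        _ ≤ (2:ℝ) ^ lam * (1 + s) ^ (lam - 1) := by
            have h3 := Real.rpow_nonneg h2s.le (lam - 1)
            have h4 := Real.rpow_nonneg h1s.le (lam - 1)
            have h5 : (0:ℝ) ≤ (1 + s) * (1 + s) ^ (lam - 1) := by positivity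
            nlinarith
  -- combine
  have hmain : (1 - b * s) ^ (-lam - 1) * (1 + s) * (1 - s ^ 2) ^ (lam - 1)
      ≤ (2:ℝ) ^ (3 * lam + 2) * (w ^ (lam - 1) * (t + w) ^ (-lam - 1)) := by
    have hL : (1 - b * s) ^ (-lam - 1) * (1 + s) * (1 - s ^ 2) ^ (lam - 1)
        = (1 - b * s) ^ (-lam - 1) * ((1 + s) * (1 - s ^ 2) ^ (lam - 1)) := by ring
    rw [hL]
    have hnn1 : (0:ℝ) ≤ (1 + s) * (1 - s ^ 2) ^ (lam - 1) := by
      have : (0:ℝ) ≤ (1 - s ^ 2) ^ (lam - 1) := Real.rpow_nonneg (by nlinarith) _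
      positivity
    have hnn2 : (0:ℝ) ≤ (2:ℝ) ^ (2 * lam + 2) * (t + w) ^ (-lam - 1) := by positivity
    calc (1 - b * s) ^ (-lam - 1) * ((1 + s) * (1 - s ^ 2) ^ (lam - 1))
        ≤ ((2:ℝ) ^ (2 * lam + 2) * (t + w) ^ (-lam - 1)) * ((2:ℝ) ^ lam * w ^ (lam - 1)) :=
          mul_le_mul hA hB hnn1 hnn2
      _ = ((2:ℝ) ^ (2 * lam + 2) * (2:ℝ) ^ lam) * (w ^ (lam - 1) * (t + w) ^ (-lam - 1)) := by
          ring
      _ = (2:ℝ) ^ (3 * lam + 2) * (w ^ (lam - 1) * (t + w) ^ (-lam - 1)) := by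
          rw [← Real.rpow_add (by norm_num : (0:ℝ) < 2)]
          ring_nf
  refine hmain.trans ?_
  apply mul_le_mul_of_nonneg_left _ (Real.rpow_nonneg (by norm_num) _)
  rcases le_or_gt 0 s with hcase | hcase
  · have hws : w = 1 - s := by rw [hwdef, abs_of_nonneg hcase]
    rw [hws]
    have : (0:ℝ) ≤ (1 + s) ^ (lam - 1) * (t + (1 + s)) ^ (-lam - 1) := by positivity
    linarith
  · have hws : w = 1 + s := by rw [hwdef, abs_of_neg hcase]; ring
    rw [hws]
    have : (0:ℝ) ≤ (1 - s) ^ (lam - 1) * (t + (1 - s)) ^ (-lam - 1) := by positivity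
    linarith

theorem paley_stmt1 (lam : ℝ) (hlam : 0 < lam) :
    ∃ C > (0 : ℝ), ∀ b : ℝ, -1 < b → b < 1 →
      ∫ s in (-1 : ℝ)..1, (1 - b * s) ^ (-lam - 1) * (1 + s) * (1 - s ^ 2) ^ (lam - 1)
        ≤ C / (1 - |b|) := by
  refine ⟨(2:ℝ) ^ (3 * lam + 3) / lam, by positivity, ?_⟩
  intro b hb1 hb2
  have hb : |b| < 1 := abs_lt.2 ⟨hb1, hb2⟩
  set t := 1 - |b| with htdef
  have ht : 0 < t := by simp only [htdef]; linarith
  set h : ℝ → ℝ := fun u => u ^ (lam - 1) * (t + u) ^ (-lam - 1) with hhdef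
  set K : ℝ := (2:ℝ) ^ (3 * lam + 2) with hKdef
  have hK : 0 < K := Real.rpow_pos_of_pos two_pos _
  set f : ℝ → ℝ :=
    fun s => (1 - b * s) ^ (-lam - 1) * (1 + s) * (1 - s ^ 2) ^ (lam - 1) with hfdef
  set g : ℝ → ℝ := fun s => K * (h (1 - s) + h (1 + s)) with hgdef
  -- integrabilities
  have hint : IntervalIntegrable h volume 0 2 := paley_aux_integrable lam t hlam ht
  have hint1 : IntervalIntegrable (fun s => h (1 - s)) volume (-1) 1 := by
    have := (hint.comp_sub_left 1).symm
    norm_num at this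
    exact this
  have hint2 : IntervalIntegrable (fun s => h (1 + s)) volume (-1) 1 := by
    have := hint.comp_add_left 1
    norm_num at this
    exact this
  have hintg : IntervalIntegrable g volume (-1) 1 := (hint1.add hint2).const_mul K
  -- a.e. facts
  have hnull : ∀ᵐ (x:ℝ) ∂volume, ¬ (x = -1 ∨ x = 1) := by
    have hm : volume ({-1, 1} : Set ℝ) = 0 :=
      Set.Finite.measure_zero (by simp) volume
    rw [MeasureTheory.ae_iff]
    have hset : {x : ℝ | ¬¬(x = -1 ∨ x = 1)} = {-1, 1} := by
      ext x; simp only [Set.mem_setOf_eq, not_not, Set.mem_insert_iff, Set.mem_singleton_iff]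
    rw [hset]
    exact hm
  have hfnonneg : ∀ x ∈ Set.Ioo (-1:ℝ) 1, 0 ≤ f x := by
    intro x hx
    have h1 : (0:ℝ) ≤ (1 - b * x) ^ (-lam - 1) := Real.rpow_nonneg (by nlinarith [abs_lt.1 hb, hx.1, hx.2, sq_nonneg (b - x), sq_nonneg (b + x)]) _
    have h2 : (0:ℝ) ≤ 1 + x := by linarith [hx.1]
    have h3 : (0:ℝ) ≤ (1 - x ^ 2) ^ (lam - 1) := Real.rpow_nonneg (by nlinarith [hx.1, hx.2]) _
    simp only [hfdef]
    positivity
  have hbound : ∀ x ∈ Set.Ioo (-1:ℝ) 1, f x ≤ g x := by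
    intro x hx
    exact paley_aux_pointwise lam b x hlam hb hx.1 hx.2
  have hgnonneg : ∀ x ∈ Set.Ioo (-1:ℝ) 1, 0 ≤ g x := fun x hx =>
    (hfnonneg x hx).trans (hbound x hx)
  have hmf : Measurable f := by
    apply Measurable.mul
    apply Measurable.mul
    · exact (measurable_const.sub (measurable_id.const_mul b)).pow measurable_const
    · exact measurable_const.add measurable_id
    · exact (measurable_const.sub (measurable_id.pow_const 2)).pow measurable_const
  have hintf : IntervalIntegrable f volume (-1) 1 := by
    apply hintg.mono_fun' (hmf.aestronglyMeasurable)
    have h1 : ∀ᵐ x ∂(volume.restrict (Set.uIoc (-1:ℝ) 1)), x ∈ Set.uIoc (-1:ℝ) 1 :=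
      ae_restrict_mem measurableSet_uIoc
    have h2 := ae_restrict_of_ae (μ := volume) (s := Set.uIoc (-1:ℝ) 1) hnull
    filter_upwards [h1, h2] with x hx hne
    rw [Set.uIoc_of_le (by norm_num : (-1:ℝ) ≤ 1)] at hx
    have hxIoo : x ∈ Set.Ioo (-1:ℝ) 1 := ⟨hx.1, lt_of_le_of_ne hx.2 (by tauto)⟩
    rw [Real.norm_eq_abs, abs_of_nonneg (hfnonneg x hxIoo)]
    exact hbound x hxIoo
  -- main chain
  have hmono : ∫ s in (-1:ℝ)..1, f s ≤ ∫ s in (-1:ℝ)..1, g s := by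
    apply intervalIntegral.integral_mono_ae_restrict (by norm_num) hintf hintg
    have h1 : ∀ᵐ x ∂(volume.restrict (Set.Icc (-1:ℝ) 1)), x ∈ Set.Icc (-1:ℝ) 1 :=
      ae_restrict_mem measurableSet_Icc
    have h2 := ae_restrict_of_ae (μ := volume) (s := Set.Icc (-1:ℝ) 1) hnull
    filter_upwards [h1, h2] with x hx hne
    have hxIoo : x ∈ Set.Ioo (-1:ℝ) 1 :=
      ⟨lt_of_le_of_ne hx.1 (by tauto), lt_of_le_of_ne hx.2 (by tauto)⟩
    exact hbound x hxIoo
  have hgval : ∫ s in (-1:ℝ)..1, g s = K * ((∫ u in (0:ℝ)..2, h u) + ∫ u in (0:ℝ)..2, h u) := by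
    rw [hgdef]
    rw [intervalIntegral.integral_const_mul, intervalIntegral.integral_add hint1 hint2]
    rw [intervalIntegral.integral_comp_sub_left h 1, intervalIntegral.integral_comp_add_left h 1]
    norm_num
  have hftc : ∫ u in (0:ℝ)..2, h u ≤ 1 / (lam * t) := paley_aux_ftc lam t hlam ht
  have hfinal : K * ((∫ u in (0:ℝ)..2, h u) + ∫ u in (0:ℝ)..2, h u)
      ≤ (2:ℝ) ^ (3 * lam + 3) / lam / t := by
    have h1 : K * ((∫ u in (0:ℝ)..2, h u) + ∫ u in (0:ℝ)..2, h u)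
        ≤ K * (1 / (lam * t) + 1 / (lam * t)) :=
      mul_le_mul_of_nonneg_left (add_le_add hftc hftc) hK.le
    have hK2 : (2:ℝ) ^ (3 * lam + 3) = K * 2 := by
      rw [hKdef, show (3 * lam + 3 : ℝ) = (3 * lam + 2) + 1 by ring,
        Real.rpow_add two_pos, Real.rpow_one]
    have h2 : K * (1 / (lam * t) + 1 / (lam * t)) = (2:ℝ) ^ (3 * lam + 3) / lam / t := by
      have hsum : (1 / (lam * t) + 1 / (lam * t) : ℝ) = 2 / (lam * t) := by ring
      rw [hK2, hsum, div_div]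
      ring
    linarith
  calc ∫ s in (-1:ℝ)..1, f s ≤ ∫ s in (-1:ℝ)..1, g s := hmono
    _ = K * ((∫ u in (0:ℝ)..2, h u) + ∫ u in (0:ℝ)..2, h u) := hgval
    _ ≤ (2:ℝ) ^ (3 * lam + 3) / lam / t := hfinal
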